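/- Let (Ω, ℱ, P) be a probability space with a filtration (ℱ_t)_{t∈ℕ}, let A be a nonempty finite set, and for each t ≥ 1 let σ_t : Ω → (A → ℝ) be ℱ_{t−1}-measurable with σ_t(a) ≥ 0 and ∑_{a∈A} σ_t(a) = 1, and let i_t : Ω → A be ℱ_t-measurable with E[𝟙{i_t = a} | ℱ_{t−1}] = σ_t(a) almost surely for every a ∈ A. Then almost surely lim_{t→∞} max_{a∈A} |σ̂(t)(a) − σ̄(t)(a)| = 0, where σ̂(t)(a) = (1/t) ∑_{s=1}^t 𝟙{i_s = a} is the empirical frequency and σ̄(t)(a) = (1/t) ∑_{s=1}^t σ_s(a) is the average strategy. (Lemma 1: as t approaches infinity, the empirical frequencies and the average strategies are almost surely equal in the limit.) -/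

import Mathlib

open Finset Filter MeasureTheory

section Stmt8Helpers

variable {Ω : Type*} {m0 : MeasurableSpace Ω}


variable {Ω : Type*} {m0 : MeasurableSpace Ω}

lemma integrable_of_bdd {P : Measure Ω} [IsProbabilityMeasure P] {f : Ω → ℝ} {C : ℝ}
    (hm : Measurable f) (hb : ∀ ω, |f ω| ≤ C) : Integrable f P :=
  (integrable_const C).mono' hm.aestronglyMeasurable
    (Eventually.of_forall fun ω => by simpa [Real.norm_eq_abs] using hb ω)

/-- Fourth moment bound for sums of bounded martingale differences. -/
lemma moment4 (P : Measure Ω) [IsProbabilityMeasure P] (ℱ : Filtration ℕ m0)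
    (X : ℕ → Ω → ℝ) (hmeas : ∀ s, Measurable[ℱ (s + 1)] (X s))
    (hbdd : ∀ s ω, |X s ω| ≤ 1)
    (hcond : ∀ s, P[X s | ℱ s] =ᵐ[P] (0 : Ω → ℝ)) (t : ℕ) :
    ∫ ω, (∑ s ∈ Finset.range t, X s ω) ^ 4 ∂P ≤ 6 * (t : ℝ) ^ 2 := by
  classical
  set S : ℕ → Ω → ℝ := fun t ω => ∑ s ∈ Finset.range t, X s ω with hSdef
  have hX_meas0 : ∀ s, Measurable (X s) := fun s => (hmeas s).mono (ℱ.le _) le_rfl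
  have hS_measF : ∀ t, Measurable[ℱ t] (S t) := by
    intro t
    apply Finset.measurable_sum
    intro s hs
    exact (hmeas s).mono (ℱ.mono (Nat.succ_le_of_lt (Finset.mem_range.1 hs))) le_rfl
  have hS_meas0 : ∀ t, Measurable (S t) := fun t => (hS_measF t).mono (ℱ.le _) le_rfl
  have hS_bdd : ∀ t ω, |S t ω| ≤ t := by
    intro t ω
    calc |S t ω| ≤ ∑ s ∈ Finset.range t, |X s ω| := Finset.abs_sum_le_sum_abs _ _
      _ ≤ ∑ s ∈ Finset.range t, 1 := Finset.sum_le_sum fun s _ => hbdd s ω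
      _ = t := by simp
  have hX_int : ∀ s, Integrable (X s) P := fun s => integrable_of_bdd (hX_meas0 s) (hbdd s)
  have hS2int : ∀ t, Integrable (fun ω => (S t ω) ^ 2) P := fun t =>
    integrable_of_bdd ((hS_meas0 t).pow_const 2) (fun ω => by
      rw [abs_pow]; exact pow_le_pow_left₀ (abs_nonneg _) (hS_bdd t ω) 2)
  -- orthogonality
  have horth : ∀ (s : ℕ) (f : Ω → ℝ) (C : ℝ), StronglyMeasurable[ℱ s] f →
      (∀ ω, |f ω| ≤ C) → ∫ ω, f ω * X s ω ∂P = 0 := by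
    intro s f C hf hb
    have hfm : Measurable f := hf.measurable.mono (ℱ.le s) le_rfl
    have hfX : Integrable (f * X s) P := by
      apply integrable_of_bdd (C := C) ((hfm.mul (hX_meas0 s)) : Measurable fun ω => f ω * X s ω)
      intro ω
      calc |(f * X s) ω| = |f ω| * |X s ω| := abs_mul _ _
        _ ≤ C * 1 := mul_le_mul (hb ω) (hbdd s ω) (abs_nonneg _)
            (le_trans (abs_nonneg _) (hb ω))
        _ = C := mul_one C
    have h1 := condExp_mul_of_stronglyMeasurable_left hf hfX (hX_int s)
    have h2 : P[f * X s|ℱ s] =ᵐ[P] (0 : Ω → ℝ) := by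
      refine h1.trans ?_
      filter_upwards [hcond s] with ω hω
      simp [hω]
    calc ∫ ω, f ω * X s ω ∂P = ∫ ω, (f * X s) ω ∂P := rfl
      _ = ∫ ω, (P[f * X s|ℱ s]) ω ∂P := (integral_condExp (ℱ.le s)).symm
      _ = ∫ _ω, (0 : ℝ) ∂P := integral_congr_ae h2
      _ = 0 := integral_zero _ _
  -- second moment
  have hS2 : ∀ t, ∫ ω, (S t ω) ^ 2 ∂P ≤ t := by
    intro t
    induction t with
    | zero => simp [hSdef]
    | succ t ih =>
      have hSsucc : ∀ ω, S (t + 1) ω = S t ω + X t ω := by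
        intro ω; simp [hSdef, Finset.sum_range_succ]
      have hi1 := hS2int t
      have hi2 : Integrable (fun ω => 2 * (S t ω * X t ω)) P := by
        apply integrable_of_bdd (C := 2 * t)
          (measurable_const.mul ((hS_meas0 t).mul (hX_meas0 t)))
        intro ω
        show |2 * (S t ω * X t ω)| ≤ 2 * t
        rw [abs_mul, abs_mul]
        have h2 : |(2 : ℝ)| = 2 := by norm_num
        rw [h2]
        have := mul_le_mul (hS_bdd t ω) (hbdd t ω) (abs_nonneg _) (Nat.cast_nonneg t)
        nlinarith [abs_nonneg (S t ω), abs_nonneg (X t ω)]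
      have hi3 : Integrable (fun ω => (X t ω) ^ 2) P :=
        integrable_of_bdd ((hX_meas0 t).pow_const 2) (fun ω => by
          rw [abs_pow]
          calc |X t ω| ^ 2 ≤ 1 := pow_le_one₀ (abs_nonneg _) (hbdd t ω)
            _ = 1 := rfl)
      have hmid : ∫ ω, 2 * (S t ω * X t ω) ∂P = 0 := by
        rw [integral_const_mul]
        rw [horth t (S t) t (hS_measF t).stronglyMeasurable (hS_bdd t), mul_zero]
      have hX2 : ∫ ω, (X t ω) ^ 2 ∂P ≤ 1 := by
        have hptw : ∀ ω, (X t ω) ^ 2 ≤ 1 := by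
          intro ω
          rw [← sq_abs]
          exact pow_le_one₀ (abs_nonneg _) (hbdd t ω)
        calc ∫ ω, (X t ω) ^ 2 ∂P ≤ ∫ _ω, (1 : ℝ) ∂P := integral_mono hi3 (integrable_const 1) hptw
          _ = 1 := by simp
      calc ∫ ω, (S (t + 1) ω) ^ 2 ∂P
          = ∫ ω, ((S t ω) ^ 2 + 2 * (S t ω * X t ω) + (X t ω) ^ 2) ∂P :=
            integral_congr_ae (Eventually.of_forall fun ω => by simp only [hSsucc]; ring)
        _ = (∫ ω, ((S t ω) ^ 2 + 2 * (S t ω * X t ω)) ∂P) + ∫ ω, (X t ω) ^ 2 ∂P :=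
            integral_add (hi1.add hi2) hi3
        _ = (∫ ω, (S t ω) ^ 2 ∂P) + (∫ ω, 2 * (S t ω * X t ω) ∂P) + ∫ ω, (X t ω) ^ 2 ∂P := by
            rw [integral_add hi1 hi2]
        _ ≤ (t : ℝ) + 0 + 1 := by rw [hmid]; exact add_le_add (add_le_add ih le_rfl) hX2
        _ = ((t + 1 : ℕ) : ℝ) := by push_cast; ring
  -- fourth moment
  induction t with
  | zero => simp [hSdef]
  | succ t ih =>
    have hSsucc : ∀ ω, S (t + 1) ω = S t ω + X t ω := by
      intro ω; simp [hSdef, Finset.sum_range_succ]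
    have hi1 : Integrable (fun ω => (S t ω) ^ 4) P :=
      integrable_of_bdd ((hS_meas0 t).pow_const 4) (fun ω => by
        rw [abs_pow]
        exact pow_le_pow_left₀ (abs_nonneg _) (hS_bdd t ω) 4)
    have hi2 : Integrable (fun ω => 4 * ((S t ω) ^ 3 * X t ω)) P := by
      apply integrable_of_bdd (C := 4 * (t : ℝ) ^ 3)
        (measurable_const.mul (((hS_meas0 t).pow_const 3).mul (hX_meas0 t)))
      intro ω
      show |4 * ((S t ω) ^ 3 * X t ω)| ≤ 4 * (t : ℝ) ^ 3
      rw [abs_mul, abs_mul, abs_pow]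
      have h4 : |(4 : ℝ)| = 4 := by norm_num
      rw [h4]
      have h1 : |S t ω| ^ 3 ≤ (t : ℝ) ^ 3 := pow_le_pow_left₀ (abs_nonneg _) (hS_bdd t ω) 3
      have h2 := hbdd t ω
      nlinarith [abs_nonneg (X t ω), pow_nonneg (abs_nonneg (S t ω)) 3]
    have hi3 : Integrable (fun ω => 6 * ((S t ω) ^ 2 * (X t ω) ^ 2)
        + 4 * (S t ω * (X t ω) ^ 3) + (X t ω) ^ 4) P := by
      apply integrable_of_bdd (C := 6 * (t : ℝ) ^ 2 + 4 * t + 1)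
      · exact ((measurable_const.mul (((hS_meas0 t).pow_const 2).mul
          ((hX_meas0 t).pow_const 2))).add
          (measurable_const.mul ((hS_meas0 t).mul ((hX_meas0 t).pow_const 3)))).add
          ((hX_meas0 t).pow_const 4)
      · intro ω
        have hu0 : (0 : ℝ) ≤ |S t ω| := abs_nonneg _
        have hv0 : (0 : ℝ) ≤ |X t ω| := abs_nonneg _
        have hv2 : |X t ω| ^ 2 ≤ 1 := pow_le_one₀ hv0 (hbdd t ω)
        have hv3 : |X t ω| ^ 3 ≤ 1 := pow_le_one₀ hv0 (hbdd t ω)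
        have hv4 : |X t ω| ^ 4 ≤ 1 := pow_le_one₀ hv0 (hbdd t ω)
        have hu2 : |S t ω| ^ 2 ≤ (t : ℝ) ^ 2 := pow_le_pow_left₀ hu0 (hS_bdd t ω) 2
        have b1 : |6 * ((S t ω) ^ 2 * (X t ω) ^ 2)| ≤ 6 * (t : ℝ) ^ 2 := by
          rw [abs_mul, abs_mul, abs_pow, abs_pow]
          have h6 : |(6 : ℝ)| = 6 := by norm_num
          rw [h6]
          have := mul_le_mul hu2 hv2 (pow_nonneg hv0 2) (pow_nonneg (Nat.cast_nonneg t) 2)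
          nlinarith
        have b2 : |4 * (S t ω * (X t ω) ^ 3)| ≤ 4 * (t : ℝ) := by
          rw [abs_mul, abs_mul, abs_pow]
          have h4 : |(4 : ℝ)| = 4 := by norm_num
          rw [h4]
          have := mul_le_mul (hS_bdd t ω) hv3 (pow_nonneg hv0 3) (Nat.cast_nonneg t)
          nlinarith
        have b3 : |(X t ω) ^ 4| ≤ 1 := by rw [abs_pow]; exact hv4
        calc |6 * ((S t ω) ^ 2 * (X t ω) ^ 2) + 4 * (S t ω * (X t ω) ^ 3) + (X t ω) ^ 4|
            ≤ |6 * ((S t ω) ^ 2 * (X t ω) ^ 2) + 4 * (S t ω * (X t ω) ^ 3)| + |(X t ω) ^ 4| :=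
              abs_add_le _ _
          _ ≤ |6 * ((S t ω) ^ 2 * (X t ω) ^ 2)| + |4 * (S t ω * (X t ω) ^ 3)| + |(X t ω) ^ 4| := by
              linarith [abs_add_le (6 * ((S t ω) ^ 2 * (X t ω) ^ 2)) (4 * (S t ω * (X t ω) ^ 3))]
          _ ≤ 6 * (t : ℝ) ^ 2 + 4 * t + 1 := by linarith
    have hmid : ∫ ω, 4 * ((S t ω) ^ 3 * X t ω) ∂P = 0 := by
      rw [integral_const_mul]
      have hsm : StronglyMeasurable[ℱ t] (fun ω => (S t ω) ^ 3) :=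
        ((hS_measF t).pow_const 3).stronglyMeasurable
      have hb : ∀ ω, |(fun ω => (S t ω) ^ 3) ω| ≤ (t : ℝ) ^ 3 := fun ω => by
        rw [abs_pow]; exact pow_le_pow_left₀ (abs_nonneg _) (hS_bdd t ω) 3
      rw [horth t _ ((t : ℝ) ^ 3) hsm hb, mul_zero]
    have hrest : ∫ ω, (6 * ((S t ω) ^ 2 * (X t ω) ^ 2)
        + 4 * (S t ω * (X t ω) ^ 3) + (X t ω) ^ 4) ∂P ≤ 8 * (t : ℝ) + 3 := by
      have hi_ptw : ∀ ω, 6 * ((S t ω) ^ 2 * (X t ω) ^ 2)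
          + 4 * (S t ω * (X t ω) ^ 3) + (X t ω) ^ 4 ≤ 8 * (S t ω) ^ 2 + 3 := by
        intro ω
        have hv0 : (0 : ℝ) ≤ |X t ω| := abs_nonneg _
        have hX2 : (X t ω) ^ 2 ≤ 1 := by
          rw [← sq_abs]; exact pow_le_one₀ hv0 (hbdd t ω)
        have hX4 : (X t ω) ^ 4 ≤ 1 := by
          rw [← abs_of_nonneg (by positivity : (0:ℝ) ≤ (X t ω) ^ 4), abs_pow]
          exact pow_le_one₀ hv0 (hbdd t ω)
        have c1 : (S t ω) ^ 2 * (X t ω) ^ 2 ≤ (S t ω) ^ 2 * 1 :=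
          mul_le_mul_of_nonneg_left hX2 (sq_nonneg _)
        have hSX3 : S t ω * (X t ω) ^ 3 ≤ |S t ω| := by
          calc S t ω * (X t ω) ^ 3 ≤ |S t ω * (X t ω) ^ 3| := le_abs_self _
            _ = |S t ω| * |X t ω| ^ 3 := by rw [abs_mul, abs_pow]
            _ ≤ |S t ω| * 1 :=
                mul_le_mul_of_nonneg_left (pow_le_one₀ hv0 (hbdd t ω)) (abs_nonneg _)
            _ = |S t ω| := mul_one _
        have habs : |S t ω| ≤ ((S t ω) ^ 2 + 1) / 2 := by
          nlinarith [sq_abs (S t ω), sq_nonneg (|S t ω| - 1)]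
        nlinarith
      have hbig : Integrable (fun ω => 8 * (S t ω) ^ 2) P := (hS2int t).const_mul 8
      calc ∫ ω, (6 * ((S t ω) ^ 2 * (X t ω) ^ 2) + 4 * (S t ω * (X t ω) ^ 3) + (X t ω) ^ 4) ∂P
          ≤ ∫ ω, (8 * (S t ω) ^ 2 + 3) ∂P :=
            integral_mono hi3 (hbig.add (integrable_const 3)) hi_ptw
        _ = 8 * (∫ ω, (S t ω) ^ 2 ∂P) + 3 := by
            rw [integral_add hbig (integrable_const 3), integral_const_mul, integral_const]
            simp
        _ ≤ 8 * t + 3 := by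
            have h0 := hS2 t
            nlinarith
    calc ∫ ω, (S (t + 1) ω) ^ 4 ∂P
        = ∫ ω, ((S t ω) ^ 4 + 4 * ((S t ω) ^ 3 * X t ω)
          + (6 * ((S t ω) ^ 2 * (X t ω) ^ 2) + 4 * (S t ω * (X t ω) ^ 3) + (X t ω) ^ 4)) ∂P :=
          integral_congr_ae (Eventually.of_forall fun ω => by simp only [hSsucc]; ring)
      _ = (∫ ω, ((S t ω) ^ 4 + 4 * ((S t ω) ^ 3 * X t ω)) ∂P)
          + ∫ ω, (6 * ((S t ω) ^ 2 * (X t ω) ^ 2)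
            + 4 * (S t ω * (X t ω) ^ 3) + (X t ω) ^ 4) ∂P :=
          integral_add (hi1.add hi2) hi3
      _ = (∫ ω, (S t ω) ^ 4 ∂P) + (∫ ω, 4 * ((S t ω) ^ 3 * X t ω) ∂P)
          + ∫ ω, (6 * ((S t ω) ^ 2 * (X t ω) ^ 2)
            + 4 * (S t ω * (X t ω) ^ 3) + (X t ω) ^ 4) ∂P := by
          rw [integral_add hi1 hi2]
      _ ≤ 6 * (t : ℝ) ^ 2 + 0 + (8 * t + 3) := by
          rw [hmid]
          exact add_le_add (add_le_add ih le_rfl) hrest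
      _ ≤ 6 * ((t + 1 : ℕ) : ℝ) ^ 2 := by push_cast; nlinarith [Nat.cast_nonneg (α := ℝ) t]

lemma integrable_of_bdd' {P : Measure Ω} [IsProbabilityMeasure P] {f : Ω → ℝ} {C : ℝ}
    (hm : Measurable f) (hb : ∀ ω, |f ω| ≤ C) : Integrable f P :=
  (integrable_const C).mono' hm.aestronglyMeasurable
    (Eventually.of_forall fun ω => by simpa [Real.norm_eq_abs] using hb ω)

/-- SLLN for bounded martingale differences. -/
lemma slln (P : Measure Ω) [IsProbabilityMeasure P] (ℱ : Filtration ℕ m0)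
    (X : ℕ → Ω → ℝ) (hmeas : ∀ s, Measurable[ℱ (s + 1)] (X s))
    (hbdd : ∀ s ω, |X s ω| ≤ 1)
    (hcond : ∀ s, P[X s | ℱ s] =ᵐ[P] (0 : Ω → ℝ)) :
    ∀ᵐ ω ∂P, Tendsto (fun t : ℕ => (∑ s ∈ Finset.range t, X s ω) / t) atTop (nhds 0) := by
  classical
  set S : ℕ → Ω → ℝ := fun t ω => ∑ s ∈ Finset.range t, X s ω with hSdef
  have hX_meas0 : ∀ s, Measurable (X s) := fun s => (hmeas s).mono (ℱ.le _) le_rfl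
  have hS_meas0 : ∀ t, Measurable (S t) :=
    fun t => Finset.measurable_sum _ fun s _ => hX_meas0 s
  have hS_bdd : ∀ t ω, |S t ω| ≤ t := by
    intro t ω
    calc |S t ω| ≤ ∑ s ∈ Finset.range t, |X s ω| := Finset.abs_sum_le_sum_abs _ _
      _ ≤ ∑ s ∈ Finset.range t, 1 := Finset.sum_le_sum fun s _ => hbdd s ω
      _ = t := by simp
  have key : ∀ k : ℕ, ∀ᵐ ω ∂P, ∀ᶠ t in atTop, ¬((1 / ((k : ℝ) + 1)) * t ≤ |S t ω|) := by
    intro k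
    set ε : ℝ := 1 / ((k : ℝ) + 1) with hεdef
    have hε0 : 0 < ε := by positivity
    set E : ℕ → Set Ω := fun t => {ω | ε * t ≤ |S t ω|} with hEdef
    have hmarkov : ∀ t : ℕ, 1 ≤ t →
        P (E t) ≤ ENNReal.ofReal (6 / ε ^ 4 * (1 / (t : ℝ) ^ 2)) := by
      intro t ht
      have ht0 : (0 : ℝ) < t := by exact_mod_cast ht
      have hsub : E t ⊆ {ω | (ε * t) ^ 4 ≤ (S t ω) ^ 4} := by
        intro ω hω
        simp only [hEdef, Set.mem_setOf_eq] at hω ⊢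
        calc (ε * t) ^ 4 ≤ |S t ω| ^ 4 := pow_le_pow_left₀ (by positivity) hω 4
          _ = (S t ω) ^ 4 := by
              rw [← abs_pow, abs_of_nonneg (by positivity)]
      have hint4 : Integrable (fun ω => (S t ω) ^ 4) P :=
        integrable_of_bdd' ((hS_meas0 t).pow_const 4) (fun ω => by
          rw [abs_pow]; exact pow_le_pow_left₀ (abs_nonneg _) (hS_bdd t ω) 4)
      have hm := mul_meas_ge_le_integral_of_nonneg (μ := P)
        (f := fun ω => (S t ω) ^ 4)
        (Eventually.of_forall fun ω => by positivity) hint4 ((ε * t) ^ 4)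
      have hM := moment4 P ℱ X hmeas hbdd hcond t
      have hmono : (P (E t)).toReal ≤ (P {ω | (ε * t) ^ 4 ≤ (S t ω) ^ 4}).toReal :=
        ENNReal.toReal_mono (measure_ne_top P _) (measure_mono hsub)
      have hpos : (0 : ℝ) < (ε * t) ^ 4 := by positivity
      have h1 : (P (E t)).toReal ≤ 6 / ε ^ 4 * (1 / (t : ℝ) ^ 2) := by
        have h2 : (P {ω | (ε * t) ^ 4 ≤ (S t ω) ^ 4}).toReal ≤ 6 * (t : ℝ) ^ 2 / (ε * t) ^ 4 := by
          rw [le_div_iff₀ hpos, mul_comm]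
          exact hm.trans hM
        have h3 : 6 * (t : ℝ) ^ 2 / (ε * t) ^ 4 = 6 / ε ^ 4 * (1 / (t : ℝ) ^ 2) := by
          field_simp
        rw [← h3]
        exact hmono.trans h2
      calc P (E t) = ENNReal.ofReal (P (E t)).toReal :=
            (ENNReal.ofReal_toReal (measure_ne_top P _)).symm
        _ ≤ ENNReal.ofReal (6 / ε ^ 4 * (1 / (t : ℝ) ^ 2)) := ENNReal.ofReal_le_ofReal h1
    have hsum : (∑' t, P (E t)) ≠ ⊤ := by
      set c : ℝ := 6 / ε ^ 4 with hcdef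
      have hc0 : 0 ≤ c := by positivity
      have hb : ∀ t, P (E t) ≤ ENNReal.ofReal ((4 * c + 1) * (1 / ((t : ℝ) + 1) ^ 2)) := by
        intro t
        rcases Nat.eq_zero_or_pos t with h0 | h1
        · subst h0
          calc P (E 0) ≤ 1 := prob_le_one
            _ = ENNReal.ofReal 1 := by simp
            _ ≤ ENNReal.ofReal ((4 * c + 1) * (1 / ((0 : ℕ) + 1 : ℝ) ^ 2)) := by
                apply ENNReal.ofReal_le_ofReal
                norm_num
                linarith
        · refine (hmarkov t h1).trans (ENNReal.ofReal_le_ofReal ?_)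
          have ht1 : (1 : ℝ) ≤ t := by exact_mod_cast h1
          rw [mul_one_div, mul_one_div, div_le_div_iff₀ (by positivity) (by positivity)]
          nlinarith [mul_nonneg hc0 (mul_nonneg (by linarith : (0:ℝ) ≤ 3 * t + 1)
            (by linarith : (0:ℝ) ≤ (t : ℝ) - 1)), sq_nonneg (t : ℝ)]
      have hsummable : Summable (fun t : ℕ => (4 * c + 1) * (1 / ((t : ℝ) + 1) ^ 2)) := by
        apply Summable.mul_left
        have h2 : Summable (fun n : ℕ => 1 / (n : ℝ) ^ 2) :=
          Real.summable_one_div_nat_pow.2 one_lt_two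
        have h3 := (summable_nat_add_iff 1).2 h2
        refine h3.congr fun n => ?_
        push_cast
        ring
      have hle : (∑' t, P (E t))
          ≤ ENNReal.ofReal (∑' t : ℕ, (4 * c + 1) * (1 / ((t : ℝ) + 1) ^ 2)) := by
        rw [ENNReal.ofReal_tsum_of_nonneg (fun n => by positivity) hsummable]
        exact ENNReal.tsum_le_tsum hb
      exact ne_top_of_le_ne_top ENNReal.ofReal_ne_top hle
    filter_upwards [ae_eventually_notMem hsum] with ω hω
    refine hω.mono fun t ht => ?_
    simpa [hEdef] using ht
  filter_upwards [ae_all_iff.2 key] with ω hω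
  rw [NormedAddCommGroup.tendsto_nhds_zero]
  intro ε hε
  obtain ⟨k, hk⟩ := exists_nat_one_div_lt hε
  filter_upwards [hω k, eventually_ge_atTop 1] with t ht ht1
  push_neg at ht
  have ht0 : (0 : ℝ) < t := by exact_mod_cast ht1
  have : ‖S t ω / t‖ = |S t ω| / t := by
    rw [Real.norm_eq_abs, abs_div, abs_of_nonneg ht0.le]
  rw [this]
  calc |S t ω| / t < (1 / ((k : ℝ) + 1) * t) / t := by
        exact div_lt_div_of_pos_right ht ht0
    _ = 1 / ((k : ℝ) + 1) := by field_simp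
    _ < ε := hk

lemma integrable_of_bdd'' {P : Measure Ω} [IsProbabilityMeasure P] {f : Ω → ℝ} {C : ℝ}
    (hm : Measurable f) (hb : ∀ ω, |f ω| ≤ C) : Integrable f P :=
  (integrable_const C).mono' hm.aestronglyMeasurable
    (Eventually.of_forall fun ω => by simpa [Real.norm_eq_abs] using hb ω)

end Stmt8Helpers

/-- **Lemma 1.**  Let `(ℱ_t)` be a filtration, `σ (t)` an `ℱ t`-measurable mixed strategy
over the finite action set `A` (the strategy used at time step `t+1`), and `i t` the
action played at time step `t+1`, `ℱ (t+1)`-measurable with conditional distribution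
`σ t` given `ℱ t`.  Then almost surely the empirical frequencies and the average
strategies are equal in the limit:
`max_{a∈A} |σ̂(t)(a) − σ̄(t)(a)| → 0` as `t → ∞`. -/
theorem stmt_8 {Ω : Type*} {m0 : MeasurableSpace Ω} (P : Measure Ω) [IsProbabilityMeasure P]
    (ℱ : Filtration ℕ m0)
    {A : Type*} [Fintype A] [Nonempty A] [DecidableEq A]
    [MeasurableSpace A] [MeasurableSingletonClass A]
    (σ : ℕ → Ω → A → ℝ) (i : ℕ → Ω → A)
    (hσ_meas : ∀ (t : ℕ) (a : A), Measurable[ℱ t] (fun ω => σ t ω a))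
    (hσ_nonneg : ∀ (t : ℕ) (ω : Ω) (a : A), 0 ≤ σ t ω a)
    (hσ_sum : ∀ (t : ℕ) (ω : Ω), ∑ a, σ t ω a = 1)
    (hi_meas : ∀ t : ℕ, Measurable[ℱ (t + 1)] (i t))
    (hcond : ∀ (t : ℕ) (a : A),
      (P[(fun ω => if i t ω = a then (1 : ℝ) else 0) | ℱ t]) =ᵐ[P] fun ω => σ t ω a) :
    ∀ᵐ ω ∂P, Tendsto (fun t : ℕ =>
      univ.sup' univ_nonempty fun a : A =>
        |(((Finset.range t).filter (fun s => i s ω = a)).card : ℝ) / t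
          - (∑ s ∈ Finset.range t, σ s ω a) / t|) atTop (nhds 0) := by
  classical
  have hσ_le : ∀ t ω a, σ t ω a ≤ 1 := by
    intro t ω a
    have h := Finset.single_le_sum (f := fun b => σ t ω b) (fun b _ => hσ_nonneg t ω b)
      (Finset.mem_univ a)
    simpa [hσ_sum t ω] using h
  set X : A → ℕ → Ω → ℝ :=
    fun a s ω => (if i s ω = a then (1 : ℝ) else 0) - σ s ω a with hXdef
  have hind_meas : ∀ (s : ℕ) (a : A),
      Measurable[ℱ (s + 1)] (fun ω => if i s ω = a then (1 : ℝ) else 0) := fun s a =>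
    Measurable.ite ((hi_meas s) (measurableSet_singleton a)) measurable_const measurable_const
  have hX_meas : ∀ a s, Measurable[ℱ (s + 1)] (X a s) := fun a s =>
    (hind_meas s a).sub ((hσ_meas s a).mono (ℱ.mono (Nat.le_succ s)) le_rfl)
  have hX_bdd : ∀ a s ω, |X a s ω| ≤ 1 := by
    intro a s ω
    have h1 := hσ_nonneg s ω a
    have h2 := hσ_le s ω a
    rw [abs_le]
    simp only [hXdef]
    constructor <;> split_ifs <;> linarith
  have hσ_int : ∀ s a, Integrable (fun ω => σ s ω a) P := fun s a =>
    integrable_of_bdd'' ((hσ_meas s a).mono (ℱ.le s) le_rfl)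
      (fun ω => abs_le.2 ⟨by linarith [hσ_nonneg s ω a], hσ_le s ω a⟩)
  have hind_int : ∀ s a, Integrable (fun ω => if i s ω = a then (1 : ℝ) else 0) P := fun s a =>
    integrable_of_bdd'' (C := 1) ((hind_meas s a).mono (ℱ.le _) le_rfl)
      (fun ω => by split_ifs <;> norm_num)
  have hXcond : ∀ a s, P[X a s | ℱ s] =ᵐ[P] (0 : Ω → ℝ) := by
    intro a s
    have heq : X a s = (fun ω => if i s ω = a then (1 : ℝ) else 0) - (fun ω => σ s ω a) := rfl
    rw [heq]
    refine (condExp_sub (hind_int s a) (hσ_int s a) _).trans ?_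
    rw [condExp_of_stronglyMeasurable (ℱ.le s) (hσ_meas s a).stronglyMeasurable (hσ_int s a)]
    filter_upwards [hcond s a] with ω hω
    simp [hω]
  have hall : ∀ᵐ ω ∂P, ∀ a : A,
      Tendsto (fun t : ℕ => (∑ s ∈ Finset.range t, X a s ω) / t) atTop (nhds 0) :=
    ae_all_iff.2 fun a => slln P ℱ (X a) (hX_meas a) (hX_bdd a) (hXcond a)
  filter_upwards [hall] with ω hω
  have hrw : ∀ (a : A) (t : ℕ),
      (((Finset.range t).filter (fun s => i s ω = a)).card : ℝ) / t
        - (∑ s ∈ Finset.range t, σ s ω a) / t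
      = (∑ s ∈ Finset.range t, X a s ω) / t := by
    intro a t
    simp only [hXdef]
    rw [Finset.sum_sub_distrib, sub_div]
    congr 2
    rw [Finset.card_filter]
    push_cast
    rfl
  have hsum0 : Tendsto (fun t : ℕ =>
      ∑ a : A, |(((Finset.range t).filter (fun s => i s ω = a)).card : ℝ) / t
        - (∑ s ∈ Finset.range t, σ s ω a) / t|) atTop (nhds 0) := by
    have h1 : (fun t : ℕ =>
        ∑ a : A, |(((Finset.range t).filter (fun s => i s ω = a)).card : ℝ) / t
          - (∑ s ∈ Finset.range t, σ s ω a) / t|)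
        = fun t : ℕ => ∑ a : A, |(∑ s ∈ Finset.range t, X a s ω) / t| :=
      funext fun t => Finset.sum_congr rfl fun a _ => by rw [hrw a t]
    rw [h1]
    have h2 := tendsto_finset_sum (univ : Finset A) (fun a _ => (hω a).abs)
    simpa using h2
  refine tendsto_of_tendsto_of_tendsto_of_le_of_le tendsto_const_nhds hsum0 ?_ ?_
  · intro t
    dsimp only
    obtain ⟨a0⟩ := (inferInstance : Nonempty A)
    calc (0 : ℝ) ≤ |(((Finset.range t).filter (fun s => i s ω = a0)).card : ℝ) / t
          - (∑ s ∈ Finset.range t, σ s ω a0) / t| := abs_nonneg _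
      _ ≤ _ := Finset.le_sup' (fun a : A =>
          |(((Finset.range t).filter (fun s => i s ω = a)).card : ℝ) / t
            - (∑ s ∈ Finset.range t, σ s ω a) / t|) (Finset.mem_univ a0)
  · intro t
    dsimp only
    apply Finset.sup'_le
    intro a _
    exact Finset.single_le_sum (f := fun a : A =>
      |(((Finset.range t).filter (fun s => i s ω = a)).card : ℝ) / t
        - (∑ s ∈ Finset.range t, σ s ω a) / t|)
      (fun b _ => abs_nonneg _) (Finset.mem_univ a)
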